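/- Truncation error at the level N_δ: for any δ > 0 with δ < 1/ξ_0 (so that N_δ ≥ 1), inf_N ε_δ(A,W,G̃_N,Ψ̃_N)_H ≤ ε_δ(A,W,G̃_{N_δ},Ψ̃_{N_δ})_H < ( μ_{N_δ−1}²/ξ_{N_δ−1}² + sup_{k ≥ N_δ} μ_k²/ξ_k² )^{1/2}. -/

import Mathlib

set_option maxHeartbeats 1000000

noncomputable section

open Filter
open scoped ENNReal RealInnerProductSpace

variable {H : Type*} [NormedAddCommGroup H] [InnerProductSpace ℝ H] [CompleteSpace H]

/-- `f` belongs to the source set `W`. -/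
def MemW (w : ℕ → H) (ξ : ℕ → ℝ) (f : H) : Prop :=
  Summable fun k => ξ k ^ 2 * ⟪f, w k⟫ ^ 2

/-- The `W`-norm of `f`. -/
def normW (w : ℕ → H) (ξ : ℕ → ℝ) (f : H) : ℝ :=
  Real.sqrt (∑' k, ξ k ^ 2 * ⟪f, w k⟫ ^ 2)

/-- The unbounded operator `A`, defined spectrally by `A f = ∑ μ_k ⟨f, w_k⟩ w_k`. -/
def opA (w : ℕ → H) (μ : ℕ → ℝ) (f : H) : H :=
  ∑' k, (μ k * ⟪f, w k⟫) • w k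

/-- The worst case recovery error `ε_δ(A, W, G, Ψ)_H` of the pair `(G, Ψ)`. -/
def recErr (w : ℕ → H) (μ ξ : ℕ → ℝ) (δ : ℝ) {N : ℕ}
    (G : H → Fin N → ℝ) (Ψ : (Fin N → ℝ) → H) : ℝ≥0∞ :=
  ⨆ (f : H) (_ : MemW w ξ f ∧ normW w ξ f ≤ 1) (fδ : H) (_ : ‖f - fδ‖ ≤ δ),
    ENNReal.ofReal ‖opA w μ f - Ψ (G fδ)‖

/-- The `(N,δ)`-optimal recovery error `R_{N,δ}(A, W)_H`. -/
def Ropt (w : ℕ → H) (μ ξ : ℕ → ℝ) (δ : ℝ) (N : ℕ) : ℝ≥0∞ :=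
  ⨅ (G : H → Fin N → ℝ) (_ : Continuous G) (Ψ : (Fin N → ℝ) → H),
    recErr w μ ξ δ G Ψ

/-- The `δ`-optimal recovery error `R_δ(A, W)_H`. -/
def RoptAll (w : ℕ → H) (μ ξ : ℕ → ℝ) (δ : ℝ) : ℝ≥0∞ :=
  ⨅ N : ℕ, Ropt w μ ξ δ N

/-- The critical index `N_δ = min {N ≥ 0 : ξ_N ≥ 1/δ}`. -/
def Ncrit (ξ : ℕ → ℝ) (δ : ℝ) : ℕ := sInf {N : ℕ | 1 / δ ≤ ξ N}

/-- The information map of the truncation method: the first `N` Fourier coefficients. -/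
def Gtrunc (w : ℕ → H) (N : ℕ) (f : H) : Fin N → ℝ := fun k => ⟪f, w k⟫

/-- The recovery algorithm of the truncation method. -/
def Psitrunc (w : ℕ → H) (μ : ℕ → ℝ) (N : ℕ) (x : Fin N → ℝ) : H :=
  ∑ k : Fin N, (μ k * x k) • w k

lemma aux_hasSum (w : ℕ → H) (hw_on : Orthonormal ℝ w)
    (hw_dense : Dense (Submodule.span ℝ (Set.range w) : Set H))
    (a : ℕ → ℝ) (ha : Summable fun k => a k ^ 2) :
    ∃ g : H, HasSum (fun k => a k • w k) g ∧ ‖g‖ ^ 2 = ∑' k, a k ^ 2 := by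
  have hsp : ⊤ ≤ (Submodule.span ℝ (Set.range w)).topologicalClosure := by
    intro x _
    have : x ∈ closure (Submodule.span ℝ (Set.range w) : Set H) := by
      rw [hw_dense.closure_eq]; trivial
    simpa [← Submodule.topologicalClosure_coe] using this
  set b : HilbertBasis ℕ ℝ H := HilbertBasis.mk hw_on hsp with hb
  have hbw : ∀ i, b i = w i := fun i => congrFun (HilbertBasis.coe_mk _ _) i
  have hmem : Memℓp a 2 := by
    apply memℓp_gen
    have : (fun i => ‖a i‖ ^ (2 : ℝ≥0∞).toReal) = fun i => a i ^ 2 := by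
      funext i
      rw [ENNReal.toReal_ofNat, show ((2:ℝ)) = ((2:ℕ):ℝ) by norm_num,
        Real.rpow_natCast]
      simp [sq_abs]
    rw [this]; exact ha
  set fa : lp (fun _ : ℕ => ℝ) 2 := ⟨a, hmem⟩ with hfa
  set g : H := b.repr.symm fa with hg
  have hfun : (fun i => fa i • b i) = fun k => a k • w k := funext fun i => by
    rw [hbw]
  have hsum : HasSum (fun k => a k • w k) g := hfun ▸ b.hasSum_repr_symm fa
  have hinner : ∀ k, ⟪g, w k⟫ = a k := by
    intro k
    have h2 : HasSum (fun i => ⟪w k, a i • w i⟫) ⟪w k, g⟫ :=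
      (innerSL ℝ (w k)).hasSum hsum
    have h3 : HasSum (fun i => if i = k then a k else 0) ⟪w k, g⟫ := by
      refine h2.congr_fun fun i => ?_
      rw [real_inner_smul_right, orthonormal_iff_ite.mp hw_on]
      by_cases h : k = i <;> simp [h, eq_comm]
    have := h3.unique (hasSum_ite_eq k (a k))
    rw [real_inner_comm]; exact this
  refine ⟨g, hsum, ?_⟩
  have hp : ∑' i, ⟪g, w i⟫ * ⟪w i, g⟫ = ⟪g, g⟫ := by
    simpa [hbw] using b.tsum_inner_mul_inner g g
  rw [← real_inner_self_eq_norm_sq, ← hp]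
  congr 1; funext i
  have h5 := hinner i
  rw [real_inner_comm] at h5
  rw [h5, hinner i]; ring

/-- truncation error at the level `N_δ`. -/
theorem stmt3
    (w : ℕ → H) (hw_on : Orthonormal ℝ w)
    (hw_dense : Dense (Submodule.span ℝ (Set.range w) : Set H))
    (μ ξ : ℕ → ℝ)
    (hμ0 : 0 < μ 0) (hμmono : Monotone μ) (hμtop : Tendsto μ atTop atTop)
    (hξ0 : 0 < ξ 0) (hξmono : Monotone ξ) (hξtop : Tendsto ξ atTop atTop)
    (hratio : Tendsto (fun k => μ k / ξ k) atTop (nhds 0)) :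
    ∀ δ : ℝ, 0 < δ → δ < 1 / ξ 0 →
      (⨅ N : ℕ, recErr w μ ξ δ (Gtrunc w N) (Psitrunc w μ N)) ≤
          recErr w μ ξ δ (Gtrunc w (Ncrit ξ δ)) (Psitrunc w μ (Ncrit ξ δ)) ∧
        recErr w μ ξ δ (Gtrunc w (Ncrit ξ δ)) (Psitrunc w μ (Ncrit ξ δ)) <
          ENNReal.ofReal (Real.sqrt
            ((μ (Ncrit ξ δ - 1) / ξ (Ncrit ξ δ - 1)) ^ 2 +
              ⨆ j : ℕ, (μ (Ncrit ξ δ + j) / ξ (Ncrit ξ δ + j)) ^ 2)) := by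
  intro δ hδ hδξ
  set N := Ncrit ξ δ with hNdef
  have hξpos : ∀ k, 0 < ξ k := fun k => lt_of_lt_of_le hξ0 (hξmono (Nat.zero_le k))
  have hμpos : ∀ k, 0 < μ k := fun k => lt_of_lt_of_le hμ0 (hμmono (Nat.zero_le k))
  have hne : {n : ℕ | 1 / δ ≤ ξ n}.Nonempty := (hξtop.eventually_ge_atTop (1/δ)).exists
  have hNmem : 1 / δ ≤ ξ N := Nat.sInf_mem hne
  have hN1 : 1 ≤ N := by
    rcases Nat.eq_zero_or_pos N with h0 | h; swap
    · exact h
    exfalso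
    have h1 : ξ 0 < 1 / δ := by
      rw [lt_div_iff₀ hδ]
      have := (lt_div_iff₀ (hξpos 0)).mp hδξ
      linarith [mul_comm δ (ξ 0)]
    rw [h0] at hNmem
    linarith
  have hNsub : ξ (N - 1) < 1 / δ := by
    have hlt : N - 1 < N := Nat.sub_lt (by omega) one_pos
    have := Nat.notMem_of_lt_sInf (s := {n : ℕ | 1 / δ ≤ ξ n}) hlt
    exact lt_of_not_ge this
  -- boundedness of the ratio sequence
  have hrat2 : Tendsto (fun k => (μ k / ξ k) ^ 2) atTop (nhds 0) := by
    have := hratio.pow 2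
    simpa using this
  have hbdd : BddAbove (Set.range fun k => (μ k / ξ k) ^ 2) := hrat2.bddAbove_range
  have hbddN : BddAbove (Set.range fun j => (μ (N + j) / ξ (N + j)) ^ 2) := by
    obtain ⟨C, hC⟩ := hbdd
    exact ⟨C, by rintro x ⟨j, rfl⟩; exact hC ⟨N + j, rfl⟩⟩
  set S := ⨆ j : ℕ, (μ (N + j) / ξ (N + j)) ^ 2 with hSdef
  have hS0 : 0 ≤ S := le_trans (sq_nonneg _) (le_ciSup hbddN 0)
  have hSle : ∀ k, N ≤ k → (μ k / ξ k) ^ 2 ≤ S := by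
    intro k hk
    have hk' : k = N + (k - N) := by omega
    rw [hk']
    exact le_ciSup hbddN (k - N)
  obtain ⟨C, hC⟩ := hbdd
  have hCk : ∀ k, (μ k / ξ k) ^ 2 ≤ C := fun k => hC (Set.mem_range_self k)
  have hid : ∀ (k : ℕ) (x : ℝ), (μ k * x) ^ 2 = (μ k / ξ k) ^ 2 * (ξ k ^ 2 * x ^ 2) := by
    intro k x
    rw [div_pow, div_mul_eq_mul_div, mul_pow, eq_div_iff (pow_ne_zero 2 (hξpos k).ne')]
    ring
  set B := Real.sqrt ((μ (N - 1)) ^ 2 * δ ^ 2 + S) with hBdef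
  -- core estimate
  have hcore : ∀ f : H, MemW w ξ f → normW w ξ f ≤ 1 → ∀ fδ : H, ‖f - fδ‖ ≤ δ →
      ‖opA w μ f - Psitrunc w μ N (Gtrunc w N fδ)‖ ≤ B := by
    intro f hf hfn fδ hfd
    have hfsum : Summable (fun k => ξ k ^ 2 * ⟪f, w k⟫ ^ 2) := hf
    have hterm0 : ∀ k, (0:ℝ) ≤ ξ k ^ 2 * ⟪f, w k⟫ ^ 2 := fun k => by positivity
    have hW1 : ∑' k, ξ k ^ 2 * ⟪f, w k⟫ ^ 2 ≤ 1 := by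
      have h0 : (0:ℝ) ≤ ∑' k, ξ k ^ 2 * ⟪f, w k⟫ ^ 2 := tsum_nonneg hterm0
      have h1 : Real.sqrt (∑' k, ξ k ^ 2 * ⟪f, w k⟫ ^ 2) ≤ 1 := hfn
      nlinarith [Real.sq_sqrt h0, Real.sqrt_nonneg (∑' k, ξ k ^ 2 * ⟪f, w k⟫ ^ 2)]
    have haux : Summable (fun k => (μ k * ⟪f, w k⟫) ^ 2) := by
      refine Summable.of_nonneg_of_le (fun k => sq_nonneg _) (fun k => ?_) (hfsum.mul_left C)
      rw [hid]
      exact mul_le_mul_of_nonneg_right (hCk k) (hterm0 k)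
    set a : ℕ → ℝ := fun k => if k < N then μ k * ⟪f - fδ, w k⟫ else μ k * ⟪f, w k⟫ with ha
    have ha2 : Summable (fun k => a k ^ 2) := by
      refine (summable_nat_add_iff N).mp
        (((summable_nat_add_iff N).mpr haux).congr fun n => ?_)
      simp only [ha]
      rw [if_neg (by omega)]
    obtain ⟨g, hgsum, hgnorm⟩ := aux_hasSum w hw_on hw_dense a ha2
    obtain ⟨gA, hgAsum, _⟩ := aux_hasSum w hw_on hw_dense (fun k => μ k * ⟪f, w k⟫) haux
    have hopA : opA w μ f = gA := by
      rw [opA]; exact hgAsum.tsum_eq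
    have hΨ : HasSum (fun k => if k < N then (μ k * ⟪fδ, w k⟫) • w k else 0)
        (Psitrunc w μ N (Gtrunc w N fδ)) := by
      have h := hasSum_sum_of_ne_finset_zero (s := Finset.range N) (L := SummationFilter.unconditional ℕ)
        (f := fun k => if k < N then (μ k * ⟪fδ, w k⟫) • w k else 0)
        (fun k hk => if_neg (by simpa using hk))
      convert h using 1
      rw [Psitrunc]
      simp only [Gtrunc]
      rw [Fin.sum_univ_eq_sum_range (fun k => (μ k * ⟪fδ, w k⟫) • w k) N]
      exact Finset.sum_congr rfl fun k hk => (if_pos (Finset.mem_range.mp hk)).symm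
    have hdiff : HasSum (fun k => a k • w k)
        (gA - Psitrunc w μ N (Gtrunc w N fδ)) := by
      refine (hgAsum.sub hΨ).congr_fun fun k => ?_
      by_cases hk : k < N
      · simp only [ha, if_pos hk, inner_sub_left, mul_sub, sub_smul]
      · simp only [ha, if_neg hk, sub_zero]
    have hgval : g = opA w μ f - Psitrunc w μ N (Gtrunc w N fδ) := by
      rw [hopA]
      exact hgsum.unique hdiff
    rw [← hgval]
    -- now bound ‖g‖
    have hsumsplit := Summable.sum_add_tsum_nat_add (f := fun k => a k ^ 2) N ha2
    have hpart1 : ∑ i ∈ Finset.range N, a i ^ 2 ≤ (μ (N - 1)) ^ 2 * δ ^ 2 := by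
      have hbessel : ∑ i ∈ Finset.range N, ⟪f - fδ, w i⟫ ^ 2 ≤ δ ^ 2 := by
        have hb := hw_on.sum_inner_products_le (s := Finset.range N) (f - fδ)
        have hb2 : ∑ i ∈ Finset.range N, ⟪f - fδ, w i⟫ ^ 2 ≤ ‖f - fδ‖ ^ 2 := by
          refine le_trans (le_of_eq ?_) hb
          refine Finset.sum_congr rfl fun i _ => ?_
          rw [real_inner_comm, Real.norm_eq_abs, sq_abs]
        refine hb2.trans ?_
        exact pow_le_pow_left₀ (norm_nonneg _) hfd 2
      calc ∑ i ∈ Finset.range N, a i ^ 2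
          = ∑ i ∈ Finset.range N, (μ i) ^ 2 * ⟪f - fδ, w i⟫ ^ 2 := by
            refine Finset.sum_congr rfl fun i hi => ?_
            rw [ha]
            simp only
            rw [if_pos (Finset.mem_range.mp hi), mul_pow]
        _ ≤ ∑ i ∈ Finset.range N, (μ (N - 1)) ^ 2 * ⟪f - fδ, w i⟫ ^ 2 := by
            refine Finset.sum_le_sum fun i hi => ?_
            refine mul_le_mul_of_nonneg_right ?_ (sq_nonneg _)
            exact pow_le_pow_left₀ (hμpos i).le
              (hμmono (by have := Finset.mem_range.mp hi; omega)) 2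
        _ = (μ (N - 1)) ^ 2 * ∑ i ∈ Finset.range N, ⟪f - fδ, w i⟫ ^ 2 := by
            rw [Finset.mul_sum]
        _ ≤ (μ (N - 1)) ^ 2 * δ ^ 2 :=
            mul_le_mul_of_nonneg_left hbessel (sq_nonneg _)
    have hpart2 : ∑' i, a (i + N) ^ 2 ≤ S := by
      have htail_le : ∑' i, ξ (i + N) ^ 2 * ⟪f, w (i + N)⟫ ^ 2 ≤ 1 := by
        have := Summable.sum_add_tsum_nat_add (f := fun k => ξ k ^ 2 * ⟪f, w k⟫ ^ 2) N hfsum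
        have hhead : (0:ℝ) ≤ ∑ i ∈ Finset.range N, ξ i ^ 2 * ⟪f, w i⟫ ^ 2 :=
          Finset.sum_nonneg fun i _ => hterm0 i
        linarith
      have hstep : ∑' i, a (i + N) ^ 2 ≤ ∑' i, S * (ξ (i + N) ^ 2 * ⟪f, w (i + N)⟫ ^ 2) := by
        refine Summable.tsum_le_tsum (fun i => ?_) ((summable_nat_add_iff N).mpr ha2)
          (((summable_nat_add_iff N).mpr hfsum).mul_left S)
        · rw [ha]
          simp only
          rw [if_neg (by omega), hid]
          exact mul_le_mul_of_nonneg_right (hSle _ (by omega)) (hterm0 _)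
      calc ∑' i, a (i + N) ^ 2
          ≤ ∑' i, S * (ξ (i + N) ^ 2 * ⟪f, w (i + N)⟫ ^ 2) := hstep
        _ = S * ∑' i, ξ (i + N) ^ 2 * ⟪f, w (i + N)⟫ ^ 2 := tsum_mul_left
        _ ≤ S * 1 := mul_le_mul_of_nonneg_left htail_le hS0
        _ = S := mul_one S
    have hnorm2 : ‖g‖ ^ 2 ≤ (μ (N - 1)) ^ 2 * δ ^ 2 + S := by
      rw [hgnorm, ← hsumsplit]
      exact add_le_add hpart1 hpart2
    have : ‖g‖ = Real.sqrt (‖g‖ ^ 2) := (Real.sqrt_sq (norm_nonneg g)).symm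
    rw [this, hBdef]
    exact Real.sqrt_le_sqrt hnorm2
  constructor
  · exact iInf_le _ N
  · have hle : recErr w μ ξ δ (Gtrunc w N) (Psitrunc w μ N) ≤ ENNReal.ofReal B := by
      rw [recErr]
      refine iSup_le fun f => iSup_le fun hf => iSup_le fun fδ => iSup_le fun hfd => ?_
      exact ENNReal.ofReal_le_ofReal (hcore f hf.1 hf.2 fδ hfd)
    refine lt_of_le_of_lt hle ?_
    have hpos : 0 < Real.sqrt ((μ (N - 1) / ξ (N - 1)) ^ 2 + S) := by
      apply Real.sqrt_pos.mpr
      have : (0:ℝ) < (μ (N - 1) / ξ (N - 1)) ^ 2 :=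
        pow_pos (div_pos (hμpos _) (hξpos _)) 2
      linarith
    rw [ENNReal.ofReal_lt_ofReal_iff hpos]
    apply Real.sqrt_lt_sqrt (by positivity)
    have h1 : δ < 1 / ξ (N - 1) := by
      rw [lt_div_iff₀ (hξpos _)]
      have := (lt_div_iff₀ hδ).mp hNsub
      linarith [mul_comm δ (ξ (N - 1))]
    have h2 : δ ^ 2 < (1 / ξ (N - 1)) ^ 2 := pow_lt_pow_left₀ h1 hδ.le (by norm_num)
    have h3 : (μ (N - 1)) ^ 2 * δ ^ 2 < (μ (N - 1) / ξ (N - 1)) ^ 2 := by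
      have h4 : (μ (N - 1)) ^ 2 * δ ^ 2 < (μ (N - 1)) ^ 2 * (1 / ξ (N - 1)) ^ 2 :=
        mul_lt_mul_of_pos_left h2 (pow_pos (hμpos _) 2)
      have h5 : (μ (N - 1)) ^ 2 * (1 / ξ (N - 1)) ^ 2 = (μ (N - 1) / ξ (N - 1)) ^ 2 := by
        field_simp
      linarith
    linarith
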